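/- The k-th component of the isotonic least squares projection of Z equals the left-hand slope C(k) - C(k-1) of the greatest convex minorant C of the cumulative sum diagram of Z on [0,n]. -/

import Mathlib

open MeasureTheory ProbabilityTheory

noncomputable section

/-- The monotone cone of non-decreasing sequences in `ℝⁿ`. -/
def Mcone (n : ℕ) : Set (Fin n → ℝ) := {θ | Monotone θ}

/-- `θ` is the isotonic least squares projection of `Z` onto the monotone cone. -/
def IsIsoProj (n : ℕ) (Z θ : Fin n → ℝ) : Prop :=
  θ ∈ Mcone n ∧ ∀ η ∈ Mcone n, ∑ i, (Z i - θ i) ^ 2 ≤ ∑ i, (Z i - η i) ^ 2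

/-- Partial sums `S_j = Z_1 + ... + Z_j`, with `S_0 = 0`. -/
def psum (n : ℕ) (Z : Fin n → ℝ) (j : ℕ) : ℝ :=
  ∑ i ∈ Finset.range j, if h : i < n then Z ⟨i, h⟩ else 0

/-- Left-hand slope of the greatest convex minorant of the cumulative sum diagram:
`Δ_k = min_{k ≤ v ≤ n} max_{0 ≤ u < k} (S_v - S_u)/(v - u)`. -/
def gcmSlope (n : ℕ) (Z : Fin n → ℝ) (k : ℕ) (hk : 1 ≤ k) (hkn : k ≤ n) : ℝ :=
  (Finset.Icc k n).inf' (Finset.nonempty_Icc.mpr hkn) fun v =>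
    (Finset.range k).sup' (Finset.nonempty_range_iff.mpr (by omega)) fun u =>
      (psum n Z v - psum n Z u) / ((v : ℝ) - (u : ℝ))

/-- Running averages `Z̄_j = (Z_1 + ... + Z_j)/j`, indexed by `j : Fin n` (`j`-th is over `j+1` terms). -/
def runAvg (n : ℕ) (Z : Fin n → ℝ) (j : Fin n) : ℝ :=
  psum n Z ((j : ℕ) + 1) / ((j : ℕ) + 1)

/-- The `k`-th order statistic of the running averages. -/
def avgOrderStat (n : ℕ) (Z : Fin n → ℝ) (k : Fin n) : ℝ :=
  runAvg n Z (Tuple.sort (runAvg n Z) k)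

/-- Exchangeability of a random vector. -/
def Exchangeable {Ω : Type*} [MeasurableSpace Ω] (P : Measure Ω) (n : ℕ)
    (Z : Ω → Fin n → ℝ) : Prop :=
  ∀ σ : Equiv.Perm (Fin n),
    Measure.map (fun ω => Z ω ∘ σ) P = Measure.map Z P


/-- The cumulative sum diagram: equals `S_j` at integers `j`, linear in between. -/
def csd (n : ℕ) (Z : Fin n → ℝ) (t : ℝ) : ℝ :=
  psum n Z ⌊t⌋₊ + (t - (⌊t⌋₊ : ℝ)) * (psum n Z (⌊t⌋₊ + 1) - psum n Z ⌊t⌋₊)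

namespace IsoAux

variable (n : ℕ) (Z : Fin n → ℝ)

lemma psum_zero : psum n Z 0 = 0 := by simp [psum]

lemma psum_succ (k : ℕ) (hk : k < n) :
    psum n Z (k+1) = psum n Z k + Z ⟨k, hk⟩ := by
  simp [psum, Finset.sum_range_succ, hk]

lemma csd_nat (k : ℕ) : csd n Z k = psum n Z k := by
  simp [csd, Nat.floor_natCast]

lemma mem_Icc_nat (j : ℕ) (hj : j ≤ n) : (j : ℝ) ∈ Set.Icc (0:ℝ) n :=
  ⟨Nat.cast_nonneg j, Nat.cast_le.mpr hj⟩

lemma mem_Icc_cast (x : ℝ) (h0 : 0 ≤ x) (h1 : x ≤ n) : x ∈ Set.Icc (0:ℝ) n :=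
  ⟨h0, h1⟩

lemma affine_convexOn (s : Set ℝ) (hs : Convex ℝ s) (c m : ℝ) :
    ConvexOn ℝ s (fun t => c + m * t) := by
  refine ⟨hs, fun x _ y _ a b ha hb hab => ?_⟩
  simp only [smul_eq_mul]
  have hb1 : b = 1 - a := by linarith
  subst hb1
  have : c + m * (a * x + (1-a) * y) = a * (c + m * x) + (1-a) * (c + m * y) := by ring
  linarith

lemma affine_le_csd (c m : ℝ) (hg : ∀ j : ℕ, j ≤ n → c + m * j ≤ psum n Z j)
    (t : ℝ) (ht : t ∈ Set.Icc (0:ℝ) n) : c + m * t ≤ csd n Z t := by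
  obtain ⟨ht0, htn⟩ := ht
  set j := ⌊t⌋₊ with hjdef
  have hjt : (j : ℝ) ≤ t := Nat.floor_le ht0
  have hjn : j ≤ n := by
    have := Nat.floor_le_floor htn
    simpa [hjdef] using this
  rcases eq_or_lt_of_le hjt with h | h
  · have : csd n Z t = psum n Z j := by
      simp [csd, ← hjdef, ← h]
    rw [this, ← h]
    exact hg j hjn
  · have hjn' : j < n := by
      rcases lt_or_eq_of_le hjn with h' | h'
      · exact h'
      · exfalso
        have : (n : ℝ) < t := by rw [← h']; exact h
        linarith
    have hlam1 : t - j < 1 := by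
      have := Nat.lt_floor_add_one t
      push_cast at this ⊢
      linarith
    have h1 := hg j hjn
    have h2 := hg (j+1) hjn'
    have hc : csd n Z t = (1 - (t - j)) * psum n Z j + (t - j) * psum n Z (j+1) := by
      simp only [csd, ← hjdef]; ring
    push_cast at h2
    nlinarith [hlam1, h]


variable (C : ℝ → ℝ)

/-- crossing lemma: affine `g`, convex `C`, `g ≤ C` at `q`, `C ≤ g` at `p`,
`q` strictly between `t` and `p` ⇒ `g t ≤ C t`. -/
lemma cross (hC : ConvexOn ℝ (Set.Icc (0:ℝ) n) C)
    (c m p t lam : ℝ) (hp : p ∈ Set.Icc (0:ℝ) n) (ht : t ∈ Set.Icc (0:ℝ) n)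
    (hl0 : 0 < lam) (hl1 : lam ≤ 1)
    (hgq : c + m * (lam * t + (1-lam) * p) ≤ C (lam * t + (1-lam) * p))
    (hgp : C p ≤ c + m * p) : c + m * t ≤ C t := by
  have h := hC.2 ht hp hl0.le (by linarith : (0:ℝ) ≤ 1 - lam) (by ring)
  simp only [smul_eq_mul] at h
  have key : lam * (c + m * t) ≤ lam * C t := by nlinarith
  have := le_of_mul_le_mul_left key hl0
  linarith [this]

lemma affine_le_C
    (hCconv : ConvexOn ℝ (Set.Icc (0 : ℝ) n) C)
    (hCle : ∀ t ∈ Set.Icc (0 : ℝ) n, C t ≤ csd n Z t)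
    (hCgreatest : ∀ D : ℝ → ℝ, ConvexOn ℝ (Set.Icc (0 : ℝ) n) D →
      (∀ t ∈ Set.Icc (0 : ℝ) n, D t ≤ csd n Z t) →
      ∀ t ∈ Set.Icc (0 : ℝ) n, D t ≤ C t)
    (c m : ℝ) (hg : ∀ j : ℕ, j ≤ n → c + m * j ≤ psum n Z j)
    (t : ℝ) (ht : t ∈ Set.Icc (0:ℝ) n) : c + m * t ≤ C t := by
  set D : ℝ → ℝ := fun t => max (C t) (c + m * t) with hD
  have hDconv : ConvexOn ℝ (Set.Icc (0:ℝ) n) D :=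
    hCconv.sup (affine_convexOn _ (convex_Icc _ _) c m)
  have hDle : ∀ s ∈ Set.Icc (0:ℝ) n, D s ≤ csd n Z s := fun s hs =>
    max_le (hCle s hs) (affine_le_csd n Z c m hg s hs)
  calc c + m * t ≤ D t := le_max_right _ _
    _ ≤ C t := hCgreatest D hDconv hDle t ht

variable (hCconv : ConvexOn ℝ (Set.Icc (0 : ℝ) n) C)
    (hCle : ∀ t ∈ Set.Icc (0 : ℝ) n, C t ≤ csd n Z t)
    (hCgreatest : ∀ D : ℝ → ℝ, ConvexOn ℝ (Set.Icc (0 : ℝ) n) D →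
      (∀ t ∈ Set.Icc (0 : ℝ) n, D t ≤ csd n Z t) →
      ∀ t ∈ Set.Icc (0 : ℝ) n, D t ≤ C t)

include hCle in
lemma C_le_S (j : ℕ) (hj : j ≤ n) : C j ≤ psum n Z j := by
  have := hCle j (mem_Icc_nat n j hj)
  rwa [csd_nat] at this

include hCconv hCle hCgreatest in
lemma C_zero (hn : 0 < n) : C 0 = 0 := by
  have hle : C 0 ≤ 0 := by
    have := C_le_S n Z C hCle 0 (Nat.zero_le n)
    simpa [psum_zero] using this
  have hne : (Finset.Icc 1 n).Nonempty := ⟨1, Finset.mem_Icc.mpr ⟨le_rfl, hn⟩⟩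
  set m := (Finset.Icc 1 n).inf' hne (fun j => psum n Z j / j) with hm
  have hg : ∀ j : ℕ, j ≤ n → (0:ℝ) + m * j ≤ psum n Z j := by
    intro j hj
    rcases Nat.eq_zero_or_pos j with rfl | hj1
    · simp [psum_zero]
    · have h1 : m ≤ psum n Z j / j :=
        Finset.inf'_le _ (Finset.mem_Icc.mpr ⟨hj1, hj⟩)
      have hjpos : (0:ℝ) < j := by exact_mod_cast hj1
      rw [le_div_iff₀ hjpos] at h1
      linarith
  have := affine_le_C n Z C hCconv hCle hCgreatest 0 m hg 0
    ⟨le_refl 0, Nat.cast_nonneg n⟩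
  simp at this
  linarith

include hCconv hCle hCgreatest in
lemma C_n (hn : 0 < n) : C n = psum n Z n := by
  have hle := C_le_S n Z C hCle n le_rfl
  have hne : (Finset.range n).Nonempty := ⟨0, by simp [hn]⟩
  set s := (Finset.range n).sup' hne
      (fun j => (psum n Z n - psum n Z j) / ((n:ℝ) - j)) with hs
  set c := psum n Z n - s * n with hc
  have hg : ∀ j : ℕ, j ≤ n → c + s * j ≤ psum n Z j := by
    intro j hj
    rcases eq_or_lt_of_le hj with rfl | hjlt
    · simp [hc]
    · have h1 : (psum n Z n - psum n Z j) / ((n:ℝ) - j) ≤ s := by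
        rw [hs]
        exact Finset.le_sup' (fun j : ℕ => (psum n Z n - psum n Z j) / ((n:ℝ) - j))
          (Finset.mem_range.mpr hjlt)
      have hpos : (0:ℝ) < (n:ℝ) - j := by
        have : (j:ℝ) < n := by exact_mod_cast hjlt
        linarith
      rw [div_le_iff₀ hpos] at h1
      simp only [hc]
      nlinarith
  have := affine_le_C n Z C hCconv hCle hCgreatest c s hg n
    (mem_Icc_nat n n le_rfl)
  simp only [hc] at this
  have h2 : psum n Z n ≤ C n := by nlinarith
  linarith

include hCconv in
lemma kink_nonneg (i : ℕ) (h : i + 2 ≤ n) :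
    C ((i:ℝ)+1) - C (i:ℝ) ≤ C ((i:ℝ)+2) - C ((i:ℝ)+1) := by
  have h1 := hCconv.slope_mono_adjacent (mem_Icc_nat n i (by omega))
    (x := (i:ℝ)) (y := (i:ℝ)+1) (z := (i:ℝ)+2)
    (mem_Icc_cast n _ (by positivity)
      (by exact_mod_cast h))
    (by linarith) (by linarith)
  have e1 : ((i:ℝ)+1) - i = 1 := by ring
  have e2 : ((i:ℝ)+2) - ((i:ℝ)+1) = 1 := by ring
  rw [e1, e2, div_one, div_one] at h1
  exact h1

include hCconv hCle hCgreatest in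
lemma slack (i : ℕ) (h : i + 2 ≤ n) (hlt : C ((i:ℝ)+1) < psum n Z (i+1)) :
    C ((i:ℝ)+2) - C ((i:ℝ)+1) ≤ C ((i:ℝ)+1) - C (i:ℝ) := by
  by_contra hcon
  push_neg at hcon
  -- strict kink at k = i+1 and C below S there: contradiction
  set c := min (psum n Z (i+1)) ((C (i:ℝ) + C ((i:ℝ)+2)) / 2) with hcdef
  have hclt : C ((i:ℝ)+1) < c := by
    apply lt_min hlt
    linarith
  set m := c - C (i:ℝ) with hmdef
  set b := c - m * ((i:ℝ)+1) with hbdef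
  -- g t = b + m * t;  g (i+1) = c, g i = C i, g (i+2) ≤ C (i+2)
  have hgi : b + m * (i:ℝ) = C (i:ℝ) := by simp only [hbdef, hmdef]; ring
  have hgi1 : b + m * ((i:ℝ)+1) = c := by simp only [hbdef]; ring
  have hgi2 : b + m * ((i:ℝ)+2) ≤ C ((i:ℝ)+2) := by
    have : c ≤ (C (i:ℝ) + C ((i:ℝ)+2)) / 2 := min_le_right _ _
    simp only [hbdef, hmdef]
    nlinarith
  have hg : ∀ j : ℕ, j ≤ n → b + m * j ≤ psum n Z j := by
    intro j hj
    have hjS := C_le_S n Z C hCle j hj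
    rcases lt_trichotomy j (i+1) with hjlt | rfl | hjgt
    · -- j ≤ i
      have hji : j ≤ i := by omega
      rcases eq_or_lt_of_le hji with rfl | hjlti
      · rw [hgi]; exact hjS
      · -- j < i : cross with p = i+1, q = i, lam = 1/(i+1-j)
        have hpos : (0:ℝ) < (i:ℝ) + 1 - j := by
          have : (j:ℝ) < i := by exact_mod_cast hjlti
          linarith
        set lam := 1 / ((i:ℝ) + 1 - j) with hlam
        have hl0 : 0 < lam := by positivity
        have hl1 : lam ≤ 1 := by
          rw [hlam, div_le_one hpos]
          have : (j:ℝ) < i := by exact_mod_cast hjlti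
          linarith
        have hq : lam * (j:ℝ) + (1-lam) * ((i:ℝ)+1) = (i:ℝ) := by
          rw [hlam]
          field_simp
          ring
        have hcr := cross n C hCconv b m ((i:ℝ)+1) (j:ℝ) lam
          (mem_Icc_cast n _ (by positivity)
            (by exact_mod_cast (by omega : i + 1 ≤ n)))
          (mem_Icc_nat n j hj) hl0 hl1
          (by rw [hq, hgi]) (by rw [hgi1]; exact hclt.le)
        linarith
    · push_cast
      rw [hgi1]
      exact min_le_left _ _
    · -- j ≥ i+2
      rcases eq_or_lt_of_le (show i+2 ≤ j by omega) with rfl | hjgti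
      · push_cast
        calc b + m * ((i:ℝ)+2) ≤ C ((i:ℝ)+2) := hgi2
          _ ≤ psum n Z (i+2) := by
            have := C_le_S n Z C hCle (i+2) hj
            push_cast at this
            exact this
      · -- j > i+2 : cross with p = i+1, q = i+2, lam = 1/(j-(i+1))
        have hpos : (0:ℝ) < (j:ℝ) - ((i:ℝ)+1) := by
          have : ((i:ℝ)+2) < j := by exact_mod_cast hjgti
          linarith
        set lam := 1 / ((j:ℝ) - ((i:ℝ)+1)) with hlam
        have hl0 : 0 < lam := by positivity
        have hl1 : lam ≤ 1 := by
          rw [hlam, div_le_one hpos]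
          have : ((i:ℝ)+2) < j := by exact_mod_cast hjgti
          linarith
        have hq : lam * (j:ℝ) + (1-lam) * ((i:ℝ)+1) = (i:ℝ)+2 := by
          rw [hlam]
          field_simp
          ring
        have hcr := cross n C hCconv b m ((i:ℝ)+1) (j:ℝ) lam
          (mem_Icc_cast n _ (by positivity)
            (by exact_mod_cast (by omega : i + 1 ≤ n)))
          (mem_Icc_nat n j hj) hl0 hl1
          (by rw [hq]; exact hgi2) (by rw [hgi1]; exact hclt.le)
        linarith
  have hfin := affine_le_C n Z C hCconv hCle hCgreatest b m hg ((i:ℝ)+1)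
    (mem_Icc_cast n _ (by positivity)
      (by exact_mod_cast (by omega : i + 1 ≤ n)))
  rw [hgi1] at hfin
  linarith

include hCconv in
lemma phi_mono (a b : ℕ) (hab : a ≤ b) (hb : b + 1 ≤ n) :
    C ((a:ℝ)+1) - C (a:ℝ) ≤ C ((b:ℝ)+1) - C (b:ℝ) := by
  induction b, hab using Nat.le_induction with
  | base => exact le_rfl
  | succ b hab ih =>
    have h1 := ih (by omega)
    have h2 := kink_nonneg n C hCconv b (by omega)
    push_cast
    have e : (b:ℝ)+1+1 = (b:ℝ)+2 := by ring
    rw [e]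
    linarith

include hCconv hCle hCgreatest in
lemma key_ineq (hn : 0 < n) (η : Fin n → ℝ) (hη : Monotone η) :
    ∑ i : Fin n, (Z i - (C ((i:ℝ)+1) - C (i:ℝ))) * (η i - (C ((i:ℝ)+1) - C (i:ℝ))) ≤ 0 := by
  set φ : ℕ → ℝ := fun j => C ((j:ℝ)+1) - C (j:ℝ) with hφ
  set Zn : ℕ → ℝ := fun j => if h : j < n then Z ⟨j,h⟩ else 0 with hZn
  set ηn : ℕ → ℝ := fun j => if h : j < n then η ⟨j,h⟩ else 0 with hηn
  set x : ℕ → ℝ := fun j => ηn j - φ j with hx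
  set T : ℕ → ℝ := fun j => psum n Z j - C j with hT
  have hTnonneg : ∀ j, j ≤ n → 0 ≤ T j := by
    intro j hj
    simp only [hT]
    linarith [C_le_S n Z C hCle j hj]
  have phi_succ : ∀ i : ℕ, φ (i+1) = C ((i:ℝ)+2) - C ((i:ℝ)+1) := by
    intro i
    simp only [hφ]
    push_cast
    rw [show (i:ℝ)+1+1 = (i:ℝ)+2 from by ring]
  have hQ : ∀ m, 1 ≤ m → m ≤ n →
      ∑ j ∈ Finset.range m, (Zn j - φ j) * x j ≤ T m * x (m-1) := by
    intro m hm1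
    induction m, hm1 using Nat.le_induction with
    | base =>
      intro _
      have h0 : Zn 0 - φ 0 = T 1 := by
        simp only [hZn, hφ, hT, dif_pos hn]
        rw [psum_succ n Z 0 hn, psum_zero]
        push_cast
        rw [C_zero n Z C hCconv hCle hCgreatest hn]
        ring
      rw [Finset.sum_range_one, h0]
    | succ m hm ih =>
      intro hmn
      obtain ⟨i, rfl⟩ : ∃ i, m = i + 1 := ⟨m - 1, by omega⟩
      have ihm := ih (by omega)
      simp only [Nat.add_sub_cancel] at ihm ⊢
      have hmlt : i + 1 < n := by omega
      have hd : Zn (i+1) - φ (i+1) = T (i+2) - T (i+1) := by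
        simp only [hZn, hT, dif_pos hmlt, phi_succ]
        rw [show i + 2 = (i+1) + 1 from rfl, psum_succ n Z (i+1) hmlt]
        push_cast
        ring
      have hmono_eta : ηn i ≤ ηn (i+1) := by
        simp only [hηn, dif_pos (show i < n by omega), dif_pos hmlt]
        exact hη (Fin.mk_le_mk.mpr (by omega))
      have hkink : φ i ≤ φ (i+1) := by
        rw [phi_succ]
        exact kink_nonneg n C hCconv i (by omega)
      have hslack : T (i+1) * (φ (i+1) - φ i) = 0 := by
        rcases eq_or_lt_of_le (C_le_S n Z C hCle (i+1) (by omega)) with he | hlt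
        · have hz : T (i+1) = 0 := by
            simp only [hT]
            rw [← he]
            ring
          rw [hz, zero_mul]
        · have hs := slack n Z C hCconv hCle hCgreatest i (by omega)
            (by push_cast at hlt ⊢; exact hlt)
          have hee : φ (i+1) = φ i := by
            apply le_antisymm _ hkink
            rw [phi_succ]
            exact hs
          rw [hee]
          ring
      have hT1 : 0 ≤ T (i+1) := hTnonneg (i+1) (by omega)
      calc ∑ j ∈ Finset.range (i+2), (Zn j - φ j) * x j
          = (∑ j ∈ Finset.range (i+1), (Zn j - φ j) * x j) + (Zn (i+1) - φ (i+1)) * x (i+1) :=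
            Finset.sum_range_succ _ _
        _ ≤ T (i+1) * x i + (T (i+2) - T (i+1)) * x (i+1) := by
            rw [hd]
            exact add_le_add ihm le_rfl
        _ = T (i+2) * x (i+1) + (T (i+1) * (ηn i - ηn (i+1)) + T (i+1) * (φ (i+1) - φ i)) := by
            simp only [hx]
            ring
        _ ≤ T (i+2) * x (i+1) := by
            have h1 : T (i+1) * (ηn i - ηn (i+1)) ≤ 0 :=
              mul_nonpos_of_nonneg_of_nonpos hT1 (by linarith)
            linarith [hslack]
  have hTn : T n = 0 := by
    simp only [hT, C_n n Z C hCconv hCle hCgreatest hn]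
    ring
  have hfinal : ∑ j ∈ Finset.range n, (Zn j - φ j) * x j ≤ 0 := by
    have := hQ n hn le_rfl
    rw [hTn] at this
    simpa using this
  have heq : ∑ i : Fin n, (Z i - (C ((i:ℝ)+1) - C (i:ℝ))) * (η i - (C ((i:ℝ)+1) - C (i:ℝ)))
      = ∑ j ∈ Finset.range n, (Zn j - φ j) * x j := by
    rw [← Fin.sum_univ_eq_sum_range (fun j => (Zn j - φ j) * x j) n]
    apply Finset.sum_congr rfl
    intro i _
    simp only [hZn, hηn, hx, hφ, dif_pos i.isLt, Fin.eta]
  rw [heq]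
  exact hfinal

include hCconv hCle hCgreatest in
lemma phi_min (hn : 0 < n) (η : Fin n → ℝ) (hη : Monotone η) :
    ∑ i : Fin n, (Z i - (C ((i:ℝ)+1) - C (i:ℝ)))^2 ≤ ∑ i : Fin n, (Z i - η i)^2 := by
  have hk := key_ineq n Z C hCconv hCle hCgreatest hn η hη
  set φ' : Fin n → ℝ := fun i => C ((i:ℝ)+1) - C (i:ℝ) with hφ'
  have hexp : ∀ i : Fin n, (Z i - η i)^2 =
      (Z i - φ' i)^2 - 2*((Z i - φ' i)*(η i - φ' i)) + (η i - φ' i)^2 := fun i => by ring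
  rw [Finset.sum_congr rfl (fun i _ => hexp i), Finset.sum_add_distrib,
    Finset.sum_sub_distrib, ← Finset.mul_sum]
  have h2 : 0 ≤ ∑ i : Fin n, (η i - φ' i)^2 := Finset.sum_nonneg (fun i _ => sq_nonneg _)
  linarith

lemma monotone_avg2 {n : ℕ} {f g : Fin n → ℝ} (hf : Monotone f) (hg : Monotone g) :
    Monotone (fun i => (f i + g i)/2) := by
  intro a b hab
  have h1 := hf hab
  have h2 := hg hab
  simp only
  linarith

end IsoAux

/-- the components of the isotonic projection are the left-hand
slopes of the greatest convex minorant of the cumulative sum diagram. -/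
theorem isoProj_eq_gcm_slopes (n : ℕ) (Z θ : Fin n → ℝ) (hθ : IsIsoProj n Z θ)
    (C : ℝ → ℝ)
    (hCconv : ConvexOn ℝ (Set.Icc (0 : ℝ) n) C)
    (hCle : ∀ t ∈ Set.Icc (0 : ℝ) n, C t ≤ csd n Z t)
    (hCgreatest : ∀ D : ℝ → ℝ, ConvexOn ℝ (Set.Icc (0 : ℝ) n) D →
      (∀ t ∈ Set.Icc (0 : ℝ) n, D t ≤ csd n Z t) →
      ∀ t ∈ Set.Icc (0 : ℝ) n, D t ≤ C t)
    (k : Fin n) :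
    θ k = C ((k : ℝ) + 1) - C (k : ℝ) := by
  have hn : 0 < n := k.pos
  set φ' : Fin n → ℝ := fun i => C ((i:ℝ)+1) - C (i:ℝ) with hφ'
  have hφmono : Monotone φ' := by
    intro a b hab
    exact IsoAux.phi_mono n C hCconv a b hab b.isLt
  have hθmono : Monotone θ := hθ.1
  set μ : Fin n → ℝ := fun i => (θ i + φ' i)/2 with hμ
  have hmid : Monotone μ := IsoAux.monotone_avg2 hθmono hφmono
  have hA : ∑ i, (Z i - θ i)^2 ≤ ∑ i, (Z i - μ i)^2 := hθ.2 μ hmid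
  have hB : ∑ i, (Z i - φ' i)^2 ≤ ∑ i, (Z i - μ i)^2 :=
    IsoAux.phi_min n Z C hCconv hCle hCgreatest hn μ hmid
  have hid : ∀ i : Fin n, (Z i - μ i)^2 + (θ i - φ' i)^2/4
      = ((Z i - θ i)^2 + (Z i - φ' i)^2)/2 := by
    intro i
    show (Z i - (θ i + φ' i)/2)^2 + (θ i - φ' i)^2/4 = _
    ring
  have hS : ∑ i, (θ i - φ' i)^2 ≤ 0 := by
    have h1 : ∑ i, ((Z i - μ i)^2 + (θ i - φ' i)^2/4)
        = ∑ i, (((Z i - θ i)^2 + (Z i - φ' i)^2)/2) := Finset.sum_congr rfl (fun i _ => hid i)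
    rw [Finset.sum_add_distrib, ← Finset.sum_div, ← Finset.sum_div,
      Finset.sum_add_distrib] at h1
    linarith
  have hge : 0 ≤ ∑ i, (θ i - φ' i)^2 := Finset.sum_nonneg fun i _ => sq_nonneg _
  have heq0 : ∑ i, (θ i - φ' i)^2 = 0 := le_antisymm hS hge
  have hterm := (Finset.sum_eq_zero_iff_of_nonneg
    (fun i _ => sq_nonneg (θ i - φ' i))).mp heq0 k (Finset.mem_univ k)
  have : θ k = φ' k := by nlinarith [hterm]
  simpa [hφ'] using this
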